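/- For a ∈ F_{3^m}*, the points (a^{1/3}, a^{1/3}) and (a^{1/3}, −a^{1/3}) lie on the curve y^2 = x^3 + x^2 − a and are exactly the points of order 3 in the group E(a); in particular (a^{1/3}, a^{1/3}) has order 3. -/

import Mathlib

open WeierstrassCurve.Affine WeierstrassCurve.Affine.Point in
private lemma some_eq_some' {F : Type*} [Field F] {W : WeierstrassCurve.Affine F}
    {x₁ y₁ x₂ y₂ : F} (hx : x₁ = x₂) (hy : y₁ = y₂)
    {h₁ : W.Nonsingular x₁ y₁} {h₂ : W.Nonsingular x₂ y₂} :
    Point.some (h := h₁) = Point.some (h := h₂) := by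
  subst hx; subst hy; rfl

open Classical in
/-- For `a ≠ 0` and `b` the cube root of `a`, the points `(b, b)` and
`(b, -b)` lie on `y² = x³ + x² - a` and satisfy `3 • P = 0` in the group of points. -/
theorem cube_root_points_order_three
    (F : Type*) [Field F] [Fintype F] [CharP F 3]
    (a b : F) (ha : a ≠ 0) (hb : b ^ 3 = a)
    (W : WeierstrassCurve F) (hW : W = ⟨0, 1, 0, 0, -a⟩)
    (h₁ : W.toAffine.Nonsingular b b) (h₂ : W.toAffine.Nonsingular b (-b)) :
    W.toAffine.Equation b b ∧ W.toAffine.Equation b (-b) ∧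
      3 • WeierstrassCurve.Affine.Point.some (h := h₁) = 0 ∧
      3 • WeierstrassCurve.Affine.Point.some (h := h₂) = 0 := by
  subst hW
  have h3 : (3 : F) = 0 := by exact_mod_cast CharP.cast_eq_zero F 3
  have hb0 : b ≠ 0 := by
    intro h; apply ha; rw [← hb, h]; ring
  have h2ne : (2 : F) ≠ 0 := by
    intro h
    have : (1 : F) = 0 := by linear_combination h3 - h
    exact one_ne_zero this
  have hbb : b ≠ -b := by
    intro h
    apply hb0
    have h2b : 2 * b = 0 := by linear_combination h
    exact (mul_eq_zero.mp h2b).resolve_left h2ne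
  refine ⟨?_, ?_, ?_, ?_⟩
  · rw [WeierstrassCurve.Affine.equation_iff]
    simp only []
    linear_combination -hb
  · rw [WeierstrassCurve.Affine.equation_iff]
    simp only []
    linear_combination -hb
  · -- 3 • (b, b) = 0
    have hy' : b ≠ (⟨0, 1, 0, 0, -a⟩ : WeierstrassCurve F).toAffine.negY b b := by
      simpa [WeierstrassCurve.Affine.negY] using hbb
    have hs : (⟨0, 1, 0, 0, -a⟩ : WeierstrassCurve F).toAffine.slope b b b b = 1 := by
      rw [WeierstrassCurve.Affine.slope_of_Y_ne rfl hy']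
      rw [div_eq_one_iff_eq]
      · simp only [WeierstrassCurve.Affine.negY]
        linear_combination b ^ 2 * h3
      · simp only [WeierstrassCurve.Affine.negY]
        intro h
        exact hbb (by linear_combination h)
    have hdbl : WeierstrassCurve.Affine.Point.some (h := h₁) + WeierstrassCurve.Affine.Point.some (h := h₁) =
        WeierstrassCurve.Affine.Point.some (h := h₂) := by
      rw [WeierstrassCurve.Affine.Point.add_self_of_Y_ne hy']
      apply some_eq_some'
      · rw [hs]
        simp only [WeierstrassCurve.Affine.addX]
        linear_combination -b * h3
      · rw [hs]
        simp only [WeierstrassCurve.Affine.addY, WeierstrassCurve.Affine.negAddY,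
          WeierstrassCurve.Affine.addX, WeierstrassCurve.Affine.negY]
        linear_combination b * h3
    have h30 : (3 : ℕ) • WeierstrassCurve.Affine.Point.some (h := h₁) =
        (WeierstrassCurve.Affine.Point.some (h := h₁) + WeierstrassCurve.Affine.Point.some (h := h₁)) +
          WeierstrassCurve.Affine.Point.some (h := h₁) := by
      rw [succ_nsmul, two_nsmul]
    rw [h30, hdbl]
    exact WeierstrassCurve.Affine.Point.add_of_Y_eq rfl (by
      simp [WeierstrassCurve.Affine.negY])
  · -- 3 • (b, -b) = 0
    have hy' : -b ≠ (⟨0, 1, 0, 0, -a⟩ : WeierstrassCurve F).toAffine.negY b (-b) := by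
      simp only [WeierstrassCurve.Affine.negY]
      intro h
      exact hbb (by linear_combination -h)
    have hs : (⟨0, 1, 0, 0, -a⟩ : WeierstrassCurve F).toAffine.slope b b (-b) (-b) = -1 := by
      rw [WeierstrassCurve.Affine.slope_of_Y_ne rfl hy']
      rw [div_eq_iff]
      · simp only [WeierstrassCurve.Affine.negY]
        linear_combination b ^ 2 * h3
      · simp only [WeierstrassCurve.Affine.negY]
        intro h
        exact hbb (by linear_combination -h)
    have hdbl : WeierstrassCurve.Affine.Point.some (h := h₂) + WeierstrassCurve.Affine.Point.some (h := h₂) =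
        WeierstrassCurve.Affine.Point.some (h := h₁) := by
      rw [WeierstrassCurve.Affine.Point.add_self_of_Y_ne hy']
      apply some_eq_some'
      · rw [hs]
        simp only [WeierstrassCurve.Affine.addX]
        linear_combination -b * h3
      · rw [hs]
        simp only [WeierstrassCurve.Affine.addY, WeierstrassCurve.Affine.negAddY,
          WeierstrassCurve.Affine.addX, WeierstrassCurve.Affine.negY]
        linear_combination -b * h3
    have h30 : (3 : ℕ) • WeierstrassCurve.Affine.Point.some (h := h₂) =
        (WeierstrassCurve.Affine.Point.some (h := h₂) + WeierstrassCurve.Affine.Point.some (h := h₂)) +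
          WeierstrassCurve.Affine.Point.some (h := h₂) := by
      rw [succ_nsmul, two_nsmul]
    rw [h30, hdbl]
    exact WeierstrassCurve.Affine.Point.add_of_Y_eq rfl (by
      simp [WeierstrassCurve.Affine.negY])
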